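/- arXiv:2110.02499 — 2 statements merged into one kernel-verified Lean document; each statement's English description precedes it below -/
import Mathlib

section
/- For every bounded linear operator A on a complex Hilbert space, (1/4)‖A*A + AA*‖ ≤ (1/4)[ max{‖Re(A) + Im(A)‖², ‖Re(A) − Im(A)‖²} + ‖Re(A) + Im(A)‖·‖Re(A) − Im(A)‖ ] ≤ w²(A). -/
open scoped InnerProductSpace
open ContinuousLinearMap

/-- The numerical radius of a bounded linear operator. -/
noncomputable def numRadius {H : Type*} [NormedAddCommGroup H] [InnerProductSpace ℂ H]
    (A : H →L[ℂ] H) : ℝ :=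
  sSup {r : ℝ | ∃ x : H, ‖x‖ = 1 ∧ r = ‖⟪A x, x⟫_ℂ‖}

/-- The Crawford number of a bounded linear operator. -/
noncomputable def crawford {H : Type*} [NormedAddCommGroup H] [InnerProductSpace ℂ H]
    (A : H →L[ℂ] H) : ℝ :=
  sInf {r : ℝ | ∃ x : H, ‖x‖ = 1 ∧ r = ‖⟪A x, x⟫_ℂ‖}

/-- The real part of a bounded linear operator. -/
noncomputable def reP {H : Type*} [NormedAddCommGroup H] [InnerProductSpace ℂ H]
    [CompleteSpace H] (A : H →L[ℂ] H) : H →L[ℂ] H :=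
  ((2 : ℂ)⁻¹) • (A + adjoint A)

/-- The imaginary part of a bounded linear operator. -/
noncomputable def imP {H : Type*} [NormedAddCommGroup H] [InnerProductSpace ℂ H]
    [CompleteSpace H] (A : H →L[ℂ] H) : H →L[ℂ] H :=
  ((2 * Complex.I)⁻¹) • (A - adjoint A)

section Aux

variable {H : Type*} [NormedAddCommGroup H] [InnerProductSpace ℂ H] [CompleteSpace H]

/-- Norm bound for self-adjoint operators from the quadratic form. -/
lemma aux_norm_le {T : H →L[ℂ] H} (hT : IsSelfAdjoint T) {M : ℝ} (hM : 0 ≤ M)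
    (h : ∀ x : H, ‖x‖ = 1 → ‖⟪T x, x⟫_ℂ‖ ≤ M) : ‖T‖ ≤ M := by
  have hsym : LinearMap.IsSymmetric (T : H →ₗ[ℂ] H) :=
    (ContinuousLinearMap.isSelfAdjoint_iff_isSymmetric).mp hT
  -- scale-invariant form of the hypothesis
  have h' : ∀ x : H, ‖⟪T x, x⟫_ℂ‖ ≤ M * ‖x‖ ^ 2 := by
    intro x
    rcases eq_or_ne x 0 with rfl | hx
    · simp
    · have hpos : (0 : ℝ) < ‖x‖ := norm_pos_iff.2 hx
      have hu : ‖((‖x‖ : ℂ)⁻¹ • x)‖ = 1 := by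
        rw [norm_smul]
        simp [hpos.ne']
      have hkey := h _ hu
      rw [map_smul, inner_smul_left, inner_smul_right, map_inv₀, Complex.conj_ofReal] at hkey
      simp only [norm_mul, norm_inv, Complex.norm_real, Real.norm_eq_abs,
        abs_of_nonneg (norm_nonneg x)] at hkey
      have h9 : (‖x‖⁻¹ * (‖x‖⁻¹ * ‖⟪T x, x⟫_ℂ‖)) * (‖x‖ * ‖x‖) = ‖⟪T x, x⟫_ℂ‖ := by
        field_simp
      calc ‖⟪T x, x⟫_ℂ‖ = (‖x‖⁻¹ * (‖x‖⁻¹ * ‖⟪T x, x⟫_ℂ‖)) * (‖x‖ * ‖x‖) := h9.symm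
        _ ≤ M * (‖x‖ * ‖x‖) := mul_le_mul_of_nonneg_right hkey (by positivity)
        _ = M * ‖x‖ ^ 2 := by ring
  -- polarization bound on the real part
  have hre : ∀ x y : H, (⟪T x, y⟫_ℂ).re ≤ M * (‖x‖ ^ 2 + ‖y‖ ^ 2) / 2 := by
    intro x y
    have h1 : ⟪T y, x⟫_ℂ = (starRingEnd ℂ) ⟪T x, y⟫_ℂ := by
      rw [inner_conj_symm]
      exact hsym.apply_clm y x
    have hpol : ⟪T (x + y), x + y⟫_ℂ - ⟪T (x - y), x - y⟫_ℂ
        = 2 * (⟪T x, y⟫_ℂ + (starRingEnd ℂ) ⟪T x, y⟫_ℂ) := by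
      rw [← h1]
      simp only [map_add, map_sub, inner_add_left, inner_add_right, inner_sub_left,
        inner_sub_right]
      ring
    have hre4 : (⟪T (x + y), x + y⟫_ℂ).re - (⟪T (x - y), x - y⟫_ℂ).re
        = 4 * (⟪T x, y⟫_ℂ).re := by
      have h5 := congrArg Complex.re hpol
      rw [Complex.add_conj] at h5
      simp only [Complex.sub_re, Complex.mul_re, Complex.ofReal_re, Complex.ofReal_im,
        Complex.re_ofNat, Complex.im_ofNat] at h5
      linarith
    have habs : ∀ u : H, |(⟪T u, u⟫_ℂ).re| ≤ M * ‖u‖ ^ 2 := fun u =>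
      (Complex.abs_re_le_norm _).trans (by exact h' u)
    have ha := (abs_le.mp (habs (x + y))).2
    have hb := (abs_le.mp (habs (x - y))).1
    have hpar : ‖x + y‖ ^ 2 + ‖x - y‖ ^ 2 = 2 * (‖x‖ ^ 2 + ‖y‖ ^ 2) := by
      have := parallelogram_law_with_norm ℂ x y
      linarith
    have hMsum : M * ‖x + y‖ ^ 2 + M * ‖x - y‖ ^ 2 = 2 * M * (‖x‖ ^ 2 + ‖y‖ ^ 2) := by
      rw [← mul_add, hpar]; ring
    linarith
  refine T.opNorm_le_bound hM fun x => ?_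
  rcases eq_or_ne (T x) 0 with hTx | hTx
  · rw [hTx]
    simp
    positivity
  · have hTpos : (0 : ℝ) < ‖T x‖ := norm_pos_iff.2 hTx
    have hxne : x ≠ 0 := by
      intro h0
      apply hTx
      rw [h0, map_zero]
    have hxpos : (0 : ℝ) < ‖x‖ := norm_pos_iff.2 hxne
    set y : H := ((‖x‖ / ‖T x‖ : ℝ) : ℂ) • T x with hy_def
    have hy : ‖y‖ = ‖x‖ := by
      rw [hy_def, norm_smul, Complex.norm_real, Real.norm_eq_abs, abs_div,
        abs_of_nonneg (norm_nonneg x), abs_of_nonneg (norm_nonneg (T x))]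
      field_simp
    have hinner : (⟪T x, y⟫_ℂ).re = ‖x‖ * ‖T x‖ := by
      rw [hy_def, inner_smul_right]
      have h6 : ⟪T x, T x⟫_ℂ = ((‖T x‖ : ℝ) : ℂ) ^ 2 :=
        inner_self_eq_norm_sq_to_K (𝕜 := ℂ) (T x)
      rw [h6]
      have : (((‖x‖ / ‖T x‖ : ℝ) : ℂ) * ((‖T x‖ : ℝ) : ℂ) ^ 2)
          = (((‖x‖ / ‖T x‖) * ‖T x‖ ^ 2 : ℝ) : ℂ) := by push_cast; ring
      rw [this, Complex.ofReal_re]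
      field_simp
    have := hre x y
    rw [hinner, hy] at this
    have hgoal : ‖x‖ * ‖T x‖ ≤ M * ‖x‖ ^ 2 := by linarith [this]
    calc ‖T x‖ = (‖x‖ * ‖T x‖) / ‖x‖ := by field_simp
      _ ≤ (M * ‖x‖ ^ 2) / ‖x‖ := by gcongr
      _ = M * ‖x‖ := by field_simp

lemma reP_selfAdjoint (A : H →L[ℂ] H) : IsSelfAdjoint (reP A) := by
  rw [IsSelfAdjoint, reP, star_smul, star_add]
  rw [star_eq_adjoint, star_eq_adjoint, adjoint_adjoint]
  simp [add_comm, Complex.conj_inv]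

lemma imP_selfAdjoint (A : H →L[ℂ] H) : IsSelfAdjoint (imP A) := by
  rw [IsSelfAdjoint, imP, star_smul, star_sub]
  rw [star_eq_adjoint, star_eq_adjoint, adjoint_adjoint]
  have h1 : star ((2 * Complex.I)⁻¹) = -(2 * Complex.I)⁻¹ := by
    rw [Complex.star_def]
    simp [map_inv₀, Complex.ext_iff]
  rw [h1, neg_smul, ← smul_neg, neg_sub]

lemma inner_reP (A : H →L[ℂ] H) (x : H) :
    ⟪reP A x, x⟫_ℂ = ((⟪A x, x⟫_ℂ).re : ℂ) := by
  rw [reP]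
  simp only [coe_smul', Pi.smul_apply, add_apply, inner_smul_left, inner_add_left]
  rw [adjoint_inner_left, ← inner_conj_symm x (A x)]
  rw [← Complex.conj_conj ⟪A x, x⟫_ℂ]
  rw [Complex.conj_conj, Complex.add_conj]
  simp only [map_inv₀, map_ofNat]
  push_cast
  ring

lemma inner_imP (A : H →L[ℂ] H) (x : H) :
    ⟪imP A x, x⟫_ℂ = -((⟪A x, x⟫_ℂ).im : ℂ) := by
  rw [imP]
  simp only [coe_smul', Pi.smul_apply, sub_apply, inner_smul_left, inner_sub_left]
  rw [adjoint_inner_left, ← inner_conj_symm x (A x)]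
  rw [Complex.sub_conj]
  have h1 : (starRingEnd ℂ) (2 * Complex.I)⁻¹ = -(2 * Complex.I)⁻¹ := by
    simp [map_inv₀, Complex.ext_iff]
  rw [h1]
  have h2 : (2 : ℂ) * Complex.I ≠ 0 := by
    simp [Complex.I_ne_zero]
  field_simp
  push_cast
  ring

lemma sum_sq_identity (A : H →L[ℂ] H) :
    (reP A + imP A) * (reP A + imP A) + (reP A - imP A) * (reP A - imP A)
      = adjoint A * A + A * adjoint A := by
  have hrq : (reP A + imP A) * (reP A + imP A) + (reP A - imP A) * (reP A - imP A)
      = (reP A * reP A + reP A * reP A) + (imP A * imP A + imP A * imP A) := by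
    noncomm_ring
  have hre2 : reP A * reP A = ((4 : ℂ)⁻¹) • ((A + adjoint A) * (A + adjoint A)) := by
    rw [reP, smul_mul_smul_comm]
    norm_num
  have him2 : imP A * imP A = (-(4 : ℂ)⁻¹) • ((A - adjoint A) * (A - adjoint A)) := by
    rw [imP, smul_mul_smul_comm]
    congr 1
    rw [← mul_inv]
    have h2 : (2 * Complex.I) * (2 * Complex.I) = -4 := by
      rw [mul_mul_mul_comm, Complex.I_mul_I]
      norm_num
    rw [h2, inv_neg]
  have hUV : (A + adjoint A) * (A + adjoint A) - (A - adjoint A) * (A - adjoint A)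
      = (adjoint A * A + A * adjoint A) + (adjoint A * A + A * adjoint A) := by
    noncomm_ring
  rw [hrq, hre2, him2, ← add_smul, ← add_smul]
  rw [show ((4 : ℂ)⁻¹ + 4⁻¹) = 2⁻¹ from by norm_num,
    show ((-(4 : ℂ)⁻¹) + -(4 : ℂ)⁻¹) = -2⁻¹ from by norm_num, neg_smul, ← sub_eq_add_neg,
    ← smul_sub, hUV,
    smul_add, ← add_smul, show ((2 : ℂ)⁻¹ + 2⁻¹) = 1 from by norm_num, one_smul]

end Aux

theorem stmt9 {H : Type*} [NormedAddCommGroup H] [InnerProductSpace ℂ H]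
    [CompleteSpace H] [Nontrivial H] (A : H →L[ℂ] H) :
    (1/4 : ℝ) * ‖adjoint A * A + A * adjoint A‖ ≤
        (1/4 : ℝ) * (max (‖reP A + imP A‖ ^ 2) (‖reP A - imP A‖ ^ 2) +
          ‖reP A + imP A‖ * ‖reP A - imP A‖) ∧
    (1/4 : ℝ) * (max (‖reP A + imP A‖ ^ 2) (‖reP A - imP A‖ ^ 2) +
        ‖reP A + imP A‖ * ‖reP A - imP A‖) ≤ numRadius A ^ 2 := by
  set a := ‖reP A + imP A‖ with ha_def
  set b := ‖reP A - imP A‖ with hb_def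
  have ha0 : 0 ≤ a := norm_nonneg _
  have hb0 : 0 ≤ b := norm_nonneg _
  -- first inequality
  have h1 : ‖adjoint A * A + A * adjoint A‖ ≤ a ^ 2 + b ^ 2 := by
    rw [← sum_sq_identity A]
    calc ‖(reP A + imP A) * (reP A + imP A) + (reP A - imP A) * (reP A - imP A)‖
        ≤ ‖(reP A + imP A) * (reP A + imP A)‖ + ‖(reP A - imP A) * (reP A - imP A)‖ :=
          norm_add_le _ _
      _ ≤ a * a + b * b := add_le_add (norm_mul_le _ _) (norm_mul_le _ _)
      _ = a ^ 2 + b ^ 2 := by ring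
  have hfirst : (1/4 : ℝ) * ‖adjoint A * A + A * adjoint A‖ ≤
      (1/4 : ℝ) * (max (a ^ 2) (b ^ 2) + a * b) := by
    have h2 : a ^ 2 + b ^ 2 ≤ max (a ^ 2) (b ^ 2) + a * b := by
      rcases le_total a b with hab | hab
      · rw [max_eq_right (by nlinarith)]
        nlinarith
      · rw [max_eq_left (by nlinarith)]
        nlinarith
    linarith
  -- numerical radius facts
  set w := numRadius A with hw_def
  have hSne : ∃ x : H, ‖x‖ = 1 := by
    obtain ⟨z, hz⟩ := exists_ne (0 : H)
    refine ⟨(‖z‖ : ℝ)⁻¹ • z, ?_⟩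
    rw [norm_smul, Real.norm_eq_abs, abs_inv, abs_of_nonneg (norm_nonneg z)]
    exact inv_mul_cancel₀ (norm_ne_zero_iff.2 hz)
  have hbdd : BddAbove {r : ℝ | ∃ x : H, ‖x‖ = 1 ∧ r = ‖⟪A x, x⟫_ℂ‖} := by
    refine ⟨‖A‖, fun r hr => ?_⟩
    obtain ⟨x, hx, rfl⟩ := hr
    calc ‖⟪A x, x⟫_ℂ‖ ≤ ‖A x‖ * ‖x‖ := norm_inner_le_norm _ _
      _ ≤ ‖A‖ * ‖x‖ * ‖x‖ := by
          exact mul_le_mul_of_nonneg_right (A.le_opNorm x) (norm_nonneg x)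
      _ = ‖A‖ := by rw [hx]; ring
  have hwmem : ∀ x : H, ‖x‖ = 1 → ‖⟪A x, x⟫_ℂ‖ ≤ w := fun x hx =>
    le_csSup hbdd ⟨x, hx, rfl⟩
  have hw0 : 0 ≤ w := by
    obtain ⟨x, hx⟩ := hSne
    exact le_trans (norm_nonneg _) (hwmem x hx)
  have hsqrt2 : (Real.sqrt 2) ^ 2 = 2 := Real.sq_sqrt (by norm_num)
  have hsqrt2_nonneg : 0 ≤ Real.sqrt 2 := Real.sqrt_nonneg 2
  -- bound for a self-adjoint combination
  have hbound : ∀ (T : H →L[ℂ] H), IsSelfAdjoint T →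
      (∀ x : H, ‖x‖ = 1 → ‖⟪T x, x⟫_ℂ‖ ≤ Real.sqrt 2 * ‖⟪A x, x⟫_ℂ‖) →
      ‖T‖ ≤ Real.sqrt 2 * w := by
    intro T hTsa hTb
    refine aux_norm_le hTsa (by positivity) fun x hx => ?_
    exact (hTb x hx).trans (mul_le_mul_of_nonneg_left (hwmem x hx) hsqrt2_nonneg)
  have hkey : ∀ (ε : ℝ), ε = 1 ∨ ε = -1 → ∀ x : H, ‖x‖ = 1 →
      ‖((⟪A x, x⟫_ℂ).re : ℂ) + ε • (-((⟪A x, x⟫_ℂ).im : ℂ))‖ ≤ Real.sqrt 2 * ‖⟪A x, x⟫_ℂ‖ := by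
    intro ε hε x hx
    set z := ⟪A x, x⟫_ℂ with hz
    have hnorm : ‖z‖ ^ 2 = z.re ^ 2 + z.im ^ 2 := by
      rw [Complex.sq_norm, Complex.normSq_apply]
      ring
    have hz0 : 0 ≤ ‖z‖ := norm_nonneg _
    rcases hε with rfl | rfl
    · have : ((z.re : ℂ) + (1 : ℝ) • (-(z.im : ℂ))) = ((z.re - z.im : ℝ) : ℂ) := by
        rw [Complex.real_smul]; push_cast; ring
      rw [this, Complex.norm_real, Real.norm_eq_abs]
      rw [← Real.sqrt_sq_eq_abs]
      rw [show Real.sqrt 2 * ‖z‖ = Real.sqrt ((Real.sqrt 2 * ‖z‖) ^ 2) by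
        rw [Real.sqrt_sq (by positivity)]]
      apply Real.sqrt_le_sqrt
      rw [mul_pow, hsqrt2]
      nlinarith [sq_nonneg (z.re + z.im)]
    · have : ((z.re : ℂ) + (-1 : ℝ) • (-(z.im : ℂ))) = ((z.re + z.im : ℝ) : ℂ) := by
        rw [Complex.real_smul]; push_cast; ring
      rw [this, Complex.norm_real, Real.norm_eq_abs]
      rw [← Real.sqrt_sq_eq_abs]
      rw [show Real.sqrt 2 * ‖z‖ = Real.sqrt ((Real.sqrt 2 * ‖z‖) ^ 2) by
        rw [Real.sqrt_sq (by positivity)]]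
      apply Real.sqrt_le_sqrt
      rw [mul_pow, hsqrt2]
      nlinarith [sq_nonneg (z.re - z.im)]
  have haw : a ≤ Real.sqrt 2 * w := by
    rw [ha_def]
    refine hbound _ ((reP_selfAdjoint A).add (imP_selfAdjoint A)) fun x hx => ?_
    rw [add_apply, inner_add_left, inner_reP, inner_imP]
    have := hkey 1 (Or.inl rfl) x hx
    simpa using this
  have hbw : b ≤ Real.sqrt 2 * w := by
    rw [hb_def]
    refine hbound _ ((reP_selfAdjoint A).sub (imP_selfAdjoint A)) fun x hx => ?_
    rw [sub_apply, inner_sub_left, inner_reP, inner_imP]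
    have := hkey (-1) (Or.inr rfl) x hx
    simp only [neg_smul, one_smul, neg_neg] at this ⊢
    convert this using 2
    ring
  have ha2 : a ^ 2 ≤ 2 * w ^ 2 := by nlinarith
  have hb2 : b ^ 2 ≤ 2 * w ^ 2 := by nlinarith
  have hab : a * b ≤ 2 * w ^ 2 := by nlinarith
  refine ⟨hfirst, ?_⟩
  have hmax : max (a ^ 2) (b ^ 2) ≤ 2 * w ^ 2 := max_le ha2 hb2
  linarith
end

section
/- For every bounded linear operator A on a complex Hilbert space, w⁴(A) ≤ (1/4)[ w²(A²) + (1/4)‖(A*A)² + (AA*)²‖ + (1/2)w(A*A²A*) + w(A²)·‖A*A + AA*‖ ]. -/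
open scoped InnerProductSpace
open ContinuousLinearMap

section Aux

open scoped ComplexConjugate

variable {H : Type*} [NormedAddCommGroup H] [InnerProductSpace ℂ H]

lemma numSet_bdd (A : H →L[ℂ] H) :
    BddAbove {r : ℝ | ∃ x : H, ‖x‖ = 1 ∧ r = ‖⟪A x, x⟫_ℂ‖} := by
  refine ⟨‖A‖, ?_⟩
  rintro r ⟨x, hx, rfl⟩
  calc ‖⟪A x, x⟫_ℂ‖ ≤ ‖A x‖ * ‖x‖ := norm_inner_le_norm _ _
    _ ≤ ‖A‖ * ‖x‖ * ‖x‖ := by gcongr; exact A.le_opNorm x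
    _ = ‖A‖ := by rw [hx]; ring

lemma numSet_nonempty [Nontrivial H] (A : H →L[ℂ] H) :
    {r : ℝ | ∃ x : H, ‖x‖ = 1 ∧ r = ‖⟪A x, x⟫_ℂ‖}.Nonempty := by
  obtain ⟨x, hx⟩ := exists_norm_eq H (zero_le_one)
  exact ⟨_, x, hx, rfl⟩

lemma norm_inner_le_numRadius (A : H →L[ℂ] H) {x : H} (hx : ‖x‖ = 1) :
    ‖⟪A x, x⟫_ℂ‖ ≤ numRadius A :=
  le_csSup (numSet_bdd A) ⟨x, hx, rfl⟩

lemma numRadius_nonneg [Nontrivial H] (A : H →L[ℂ] H) : 0 ≤ numRadius A := by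
  obtain ⟨x, hx⟩ := exists_norm_eq H (zero_le_one : (0:ℝ) ≤ 1)
  exact le_trans (norm_nonneg _) (norm_inner_le_numRadius A hx)

lemma numRadius_le [Nontrivial H] (A : H →L[ℂ] H) {c : ℝ}
    (h : ∀ x : H, ‖x‖ = 1 → ‖⟪A x, x⟫_ℂ‖ ≤ c) : numRadius A ≤ c := by
  refine csSup_le (numSet_nonempty A) ?_
  rintro r ⟨x, hx, rfl⟩
  exact h x hx

lemma norm_inner_le_numRadius_mul [Nontrivial H] (A : H →L[ℂ] H) (x : H) :
    ‖⟪A x, x⟫_ℂ‖ ≤ numRadius A * ‖x‖ ^ 2 := by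
  rcases eq_or_ne x 0 with rfl | hx
  · simp
  · have hn : ‖x‖ ≠ 0 := norm_ne_zero_iff.mpr hx
    set u := (‖x‖ : ℂ)⁻¹ • x with hu
    have hun : ‖u‖ = 1 := by
      rw [hu, norm_smul]
      simp [inv_mul_cancel₀ hn]
    have h1 : ⟪A u, u⟫_ℂ = (‖x‖ : ℂ)⁻¹ * (starRingEnd ℂ) (‖x‖ : ℂ)⁻¹ * ⟪A x, x⟫_ℂ := by
      simp only [hu, map_smul, inner_smul_left, inner_smul_right]; ring
    have hle := norm_inner_le_numRadius A hun
    rw [h1] at hle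
    have h2 : ‖(‖x‖ : ℂ)⁻¹ * (starRingEnd ℂ) (‖x‖ : ℂ)⁻¹ * ⟪A x, x⟫_ℂ‖
        = (‖x‖⁻¹) ^ 2 * ‖⟪A x, x⟫_ℂ‖ := by
      rw [norm_mul, norm_mul, RCLike.norm_conj, norm_inv, Complex.norm_real,
        Real.norm_eq_abs, abs_of_nonneg (norm_nonneg x)]
      ring
    rw [h2] at hle
    have hx2 : (0:ℝ) < ‖x‖ ^ 2 := by positivity
    calc ‖⟪A x, x⟫_ℂ‖ = (‖x‖⁻¹) ^ 2 * ‖⟪A x, x⟫_ℂ‖ * ‖x‖ ^ 2 := by field_simp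
      _ ≤ numRadius A * ‖x‖ ^ 2 := by nlinarith

lemma buzano (a b e : H) (he : ‖e‖ = 1) :
    ‖⟪a, e⟫_ℂ * ⟪e, b⟫_ℂ‖ ≤ (‖a‖ * ‖b‖ + ‖⟪a, b⟫_ℂ‖) / 2 := by
  set c := ⟪e, b⟫_ℂ with hc
  set b' := (2 * c) • e - b with hb'
  have hnb2 : ‖b'‖ ^ 2 = ‖b‖ ^ 2 := by
    rw [hb', @norm_sub_sq ℂ]
    have h2 : ⟪(2 * c) • e, b⟫_ℂ = (starRingEnd ℂ) (2 * c) * c := by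
      rw [inner_smul_left]
    have h3 : Complex.re (⟪(2 * c) • e, b⟫_ℂ) = 2 * ‖c‖ ^ 2 := by
      rw [h2, map_mul]
      have hcc : (starRingEnd ℂ) c * c = ((‖c‖ ^ 2 : ℝ) : ℂ) := by
        rw [mul_comm, Complex.mul_conj]
        congr 1
        rw [Complex.normSq_eq_norm_sq]
      have : (starRingEnd ℂ) 2 = 2 := map_ofNat _ 2
      rw [mul_assoc, this, hcc, ← Complex.ofReal_ofNat, ← Complex.ofReal_mul]
      exact Complex.ofReal_re _
    have h4 : ‖(2 * c) • e‖ = 2 * ‖c‖ := by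
      rw [norm_smul, he, norm_mul]
      simp
    simp only [RCLike.re_to_complex]
    rw [h3, h4]
    ring
  have hnb : ‖b'‖ = ‖b‖ := by
    have h := congrArg Real.sqrt hnb2
    rwa [Real.sqrt_sq (norm_nonneg _), Real.sqrt_sq (norm_nonneg _)] at h
  have hkey : ‖2 * (⟪a, e⟫_ℂ * c) - ⟪a, b⟫_ℂ‖ ≤ ‖a‖ * ‖b‖ := by
    have h5 : ⟪a, b'⟫_ℂ = 2 * (⟪a, e⟫_ℂ * c) - ⟪a, b⟫_ℂ := by
      rw [hb', inner_sub_right, inner_smul_right]; ring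
    calc ‖2 * (⟪a, e⟫_ℂ * c) - ⟪a, b⟫_ℂ‖ = ‖⟪a, b'⟫_ℂ‖ := by rw [h5]
      _ ≤ ‖a‖ * ‖b'‖ := norm_inner_le_norm _ _
      _ = ‖a‖ * ‖b‖ := by rw [hnb]
  have h6 : (2:ℝ) * ‖⟪a, e⟫_ℂ * c‖ = ‖2 * (⟪a, e⟫_ℂ * c)‖ := by
    rw [norm_mul]; simp
  have h7 : ‖2 * (⟪a, e⟫_ℂ * c)‖ ≤ ‖2 * (⟪a, e⟫_ℂ * c) - ⟪a, b⟫_ℂ‖ + ‖⟪a, b⟫_ℂ‖ := by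
    calc ‖2 * (⟪a, e⟫_ℂ * c)‖ = ‖(2 * (⟪a, e⟫_ℂ * c) - ⟪a, b⟫_ℂ) + ⟪a, b⟫_ℂ‖ := by congr 1; ring
      _ ≤ _ := norm_add_le _ _
  linarith

variable [CompleteSpace H]

lemma ak_pointwise (A : H →L[ℂ] H) {x : H} (hx : ‖x‖ = 1) :
    ‖⟪A x, x⟫_ℂ‖ ^ 2 ≤ (1/2 : ℝ) * ‖⟪(A ^ 2) x, x⟫_ℂ‖
      + (1/4 : ℝ) * ‖adjoint A * A + A * adjoint A‖ := by
  have hb := buzano (A x) (adjoint A x) x hx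
  have e1 : ⟪x, adjoint A x⟫_ℂ = ⟪A x, x⟫_ℂ := adjoint_inner_right A x x
  have e2 : ⟪A x, adjoint A x⟫_ℂ = ⟪A (A x), x⟫_ℂ := adjoint_inner_right A (A x) x
  rw [e1, e2] at hb
  have hb' : ‖⟪A x, x⟫_ℂ‖ ^ 2 ≤ (‖A x‖ * ‖adjoint A x‖ + ‖⟪A (A x), x⟫_ℂ‖) / 2 := by
    calc ‖⟪A x, x⟫_ℂ‖ ^ 2 = ‖⟪A x, x⟫_ℂ * ⟪A x, x⟫_ℂ‖ := by rw [norm_mul]; ring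
      _ ≤ _ := hb
  have hS : ‖A x‖ ^ 2 + ‖adjoint A x‖ ^ 2 ≤ ‖adjoint A * A + A * adjoint A‖ := by
    have e3 : ⟪(adjoint A * A + A * adjoint A) x, x⟫_ℂ
        = ((‖A x‖ ^ 2 + ‖adjoint A x‖ ^ 2 : ℝ) : ℂ) := by
      have e4 : ⟪adjoint A (A x), x⟫_ℂ = ⟪A x, A x⟫_ℂ := adjoint_inner_left A x (A x)
      have e5 := adjoint_inner_left (adjoint A) x (adjoint A x)
      rw [adjoint_adjoint] at e5
      simp only [add_apply, mul_apply_eq_comp, inner_add_left, e4, e5]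
      rw [inner_self_eq_norm_sq_to_K, inner_self_eq_norm_sq_to_K]
      norm_cast
    calc ‖A x‖ ^ 2 + ‖adjoint A x‖ ^ 2
        = ‖⟪(adjoint A * A + A * adjoint A) x, x⟫_ℂ‖ := by
          rw [e3, Complex.norm_real, Real.norm_eq_abs, abs_of_nonneg (by positivity)]
      _ ≤ ‖(adjoint A * A + A * adjoint A) x‖ * ‖x‖ := norm_inner_le_norm _ _
      _ ≤ ‖adjoint A * A + A * adjoint A‖ * ‖x‖ * ‖x‖ := by
          gcongr; exact le_opNorm _ x
      _ = ‖adjoint A * A + A * adjoint A‖ := by rw [hx]; ring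
  have hAM : ‖A x‖ * ‖adjoint A x‖ ≤ (‖A x‖ ^ 2 + ‖adjoint A x‖ ^ 2) / 2 := by
    nlinarith [sq_nonneg (‖A x‖ - ‖adjoint A x‖)]
  have e6 : ⟪(A ^ 2) x, x⟫_ℂ = ⟪A (A x), x⟫_ℂ := by
    rw [pow_two, mul_apply_eq_comp]
  rw [e6]
  linarith

lemma ak [Nontrivial H] (A : H →L[ℂ] H) :
    numRadius A ^ 2 ≤ (1/2 : ℝ) * numRadius (A ^ 2)
      + (1/4 : ℝ) * ‖adjoint A * A + A * adjoint A‖ := by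
  set c := (1/2 : ℝ) * numRadius (A ^ 2) + (1/4 : ℝ) * ‖adjoint A * A + A * adjoint A‖
    with hc
  have hc0 : 0 ≤ c := by
    have := numRadius_nonneg (A ^ 2)
    have := norm_nonneg (adjoint A * A + A * adjoint A)
    rw [hc]; linarith
  have h : numRadius A ≤ Real.sqrt c := by
    apply numRadius_le
    intro x hx
    have hp := ak_pointwise A hx
    have h2 : ‖⟪A x, x⟫_ℂ‖ ^ 2 ≤ c := by
      have := norm_inner_le_numRadius (A ^ 2) hx
      rw [hc]; linarith
    exact (Real.le_sqrt (norm_nonneg _) hc0).mpr h2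
  calc numRadius A ^ 2 ≤ Real.sqrt c ^ 2 :=
        pow_le_pow_left₀ (numRadius_nonneg A) h 2
    _ = c := Real.sq_sqrt hc0

lemma selfadj_norm_le (R : H →L[ℂ] H) (hR : adjoint R = R) {M : ℝ} (hM : 0 ≤ M)
    (h : ∀ x : H, ‖⟪R x, x⟫_ℂ‖ ≤ M * ‖x‖ ^ 2) : ‖R‖ ≤ M := by
  have key : ∀ x y : H, Complex.re ⟪R x, y⟫_ℂ ≤ (M/2) * (‖x‖ ^ 2 + ‖y‖ ^ 2) := by
    intro x y
    have hsym : ⟪R y, x⟫_ℂ = (starRingEnd ℂ) ⟪R x, y⟫_ℂ := by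
      calc ⟪R y, x⟫_ℂ = ⟪adjoint R y, x⟫_ℂ := by rw [hR]
        _ = ⟪y, R x⟫_ℂ := adjoint_inner_left R x y
        _ = (starRingEnd ℂ) ⟪R x, y⟫_ℂ := (inner_conj_symm y (R x)).symm
    have hexp : ⟪R (x + y), x + y⟫_ℂ - ⟪R (x - y), x - y⟫_ℂ
        = 2 * (⟪R x, y⟫_ℂ + ⟪R y, x⟫_ℂ) := by
      simp only [map_add, map_sub, inner_add_left, inner_add_right,
        inner_sub_left, inner_sub_right]
      ring
    have hre : 4 * Complex.re ⟪R x, y⟫_ℂ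
        = Complex.re (⟪R (x + y), x + y⟫_ℂ) - Complex.re (⟪R (x - y), x - y⟫_ℂ) := by
      have := congrArg Complex.re hexp
      rw [Complex.sub_re] at this
      rw [this, hsym]
      simp only [Complex.mul_re, Complex.add_re, Complex.conj_re, Complex.conj_im,
        Complex.re_ofNat, Complex.im_ofNat]
      ring
    have b1 : Complex.re (⟪R (x + y), x + y⟫_ℂ) ≤ M * ‖x + y‖ ^ 2 := by
      calc Complex.re (⟪R (x + y), x + y⟫_ℂ) ≤ ‖⟪R (x + y), x + y⟫_ℂ‖ := by
            exact Complex.re_le_norm _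
        _ ≤ M * ‖x + y‖ ^ 2 := h _
    have b2 : -Complex.re (⟪R (x - y), x - y⟫_ℂ) ≤ M * ‖x - y‖ ^ 2 := by
      calc -Complex.re (⟪R (x - y), x - y⟫_ℂ) ≤ ‖⟪R (x - y), x - y⟫_ℂ‖ := by
            exact neg_le_abs _ |>.trans (Complex.abs_re_le_norm _)
        _ ≤ M * ‖x - y‖ ^ 2 := h _
    have hpar : ‖x + y‖ ^ 2 + ‖x - y‖ ^ 2 = 2 * (‖x‖ ^ 2 + ‖y‖ ^ 2) := by
      have := parallelogram_law_with_norm ℂ x y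
      nlinarith [this]
    nlinarith [b1, b2, hre, hpar, hM]
  refine opNorm_le_bound R hM ?_
  intro x
  rcases eq_or_ne (R x) 0 with h0 | h0
  · rw [h0]; simp; positivity
  · have hxne : x ≠ 0 := by
      rintro rfl
      simp at h0
    have hnx : 0 < ‖x‖ := norm_pos_iff.mpr hxne
    have hnRx : 0 < ‖R x‖ := norm_pos_iff.mpr h0
    set y := ((‖x‖ / ‖R x‖ : ℝ) : ℂ) • R x with hy
    have hny : ‖y‖ = ‖x‖ := by
      rw [hy, norm_smul, Complex.norm_real, Real.norm_eq_abs,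
        abs_of_nonneg (by positivity)]
      field_simp
    have hre : Complex.re ⟪R x, y⟫_ℂ = (‖x‖ / ‖R x‖) * ‖R x‖ ^ 2 := by
      have hz : ⟪R x, R x⟫_ℂ = ((‖R x‖ ^ 2 : ℝ) : ℂ) := by
        rw [inner_self_eq_norm_sq_to_K]; norm_cast
      rw [hy, inner_smul_right, hz, ← Complex.ofReal_mul]
      exact Complex.ofReal_re _
    have := key x y
    rw [hre, hny] at this
    have h7 : (‖x‖ / ‖R x‖) * ‖R x‖ ^ 2 = ‖x‖ * ‖R x‖ := by
      field_simp
    rw [h7] at this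
    nlinarith

lemma norm_add_adjoint_le [Nontrivial H] (T : H →L[ℂ] H) :
    ‖T + adjoint T‖ ≤ 2 * numRadius T := by
  apply selfadj_norm_le
  · rw [map_add, adjoint_adjoint, add_comm]
  · have := numRadius_nonneg T; linarith
  · intro x
    have e1 : ⟪(T + adjoint T) x, x⟫_ℂ = ⟪T x, x⟫_ℂ + (starRingEnd ℂ) ⟪T x, x⟫_ℂ := by
      rw [add_apply, inner_add_left]
      congr 1
      rw [adjoint_inner_left, ← inner_conj_symm]
    rw [e1]
    calc ‖⟪T x, x⟫_ℂ + (starRingEnd ℂ) ⟪T x, x⟫_ℂ‖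
        ≤ ‖⟪T x, x⟫_ℂ‖ + ‖(starRingEnd ℂ) ⟪T x, x⟫_ℂ‖ := norm_add_le _ _
      _ = 2 * ‖⟪T x, x⟫_ℂ‖ := by rw [RCLike.norm_conj]; ring
      _ ≤ 2 * (numRadius T * ‖x‖ ^ 2) := by
          have := norm_inner_le_numRadius_mul T x; linarith
      _ = 2 * numRadius T * ‖x‖ ^ 2 := by ring

end Aux

theorem stmt13 {H : Type*} [NormedAddCommGroup H] [InnerProductSpace ℂ H]
    [CompleteSpace H] [Nontrivial H] (A : H →L[ℂ] H) :
    numRadius A ^ 4 ≤ (1/4 : ℝ) * (numRadius (A ^ 2) ^ 2 +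
      (1/4 : ℝ) * ‖(adjoint A * A) ^ 2 + (A * adjoint A) ^ 2‖ +
      (1/2 : ℝ) * numRadius (adjoint A * A ^ 2 * adjoint A) +
      numRadius (A ^ 2) * ‖adjoint A * A + A * adjoint A‖) := by
  set S := adjoint A * A + A * adjoint A with hSdef
  set P := (adjoint A * A) ^ 2 + (A * adjoint A) ^ 2 with hPdef
  set T := adjoint A * A ^ 2 * adjoint A with hTdef
  have h1 : numRadius A ^ 2 ≤ (1/2 : ℝ) * numRadius (A ^ 2) + (1/4 : ℝ) * ‖S‖ := ak A
  have hstar : star A = adjoint A := star_eq_adjoint A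
  have hSS : S * S = P + (T + adjoint T) := by
    have hT' : adjoint T = A * (adjoint A) ^ 2 * A := by
      rw [hTdef, ← hstar, ← star_eq_adjoint (star A * A ^ 2 * star A)]
      simp only [star_mul, star_star, star_pow]
      noncomm_ring
    rw [hSdef, hPdef, hTdef, hT']
    noncomm_ring
  have hS2 : ‖S‖ ^ 2 = ‖S * S‖ := by
    have hsa : star S = S := by
      rw [hSdef, ← hstar]
      simp only [star_add, star_mul, star_star]
    calc ‖S‖ ^ 2 = ‖S‖ * ‖S‖ := sq ‖S‖
      _ = ‖star S * S‖ := (CStarRing.norm_star_mul_self).symm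
      _ = ‖S * S‖ := by rw [hsa]
  have h4 : ‖S * S‖ ≤ ‖P‖ + 2 * numRadius T := by
    rw [hSS]
    calc ‖P + (T + adjoint T)‖ ≤ ‖P‖ + ‖T + adjoint T‖ := norm_add_le _ _
      _ ≤ ‖P‖ + 2 * numRadius T := by
          have := norm_add_adjoint_le T; linarith
  have hss : ‖S‖ ^ 2 ≤ ‖P‖ + 2 * numRadius T := hS2 ▸ h4
  have hw2 : 0 ≤ numRadius (A ^ 2) := numRadius_nonneg _
  have hs0 : 0 ≤ ‖S‖ := norm_nonneg _
  have hc0 : 0 ≤ (1/2 : ℝ) * numRadius (A ^ 2) + (1/4 : ℝ) * ‖S‖ := by linarith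
  have h5 : numRadius A ^ 2 * numRadius A ^ 2
      ≤ ((1/2 : ℝ) * numRadius (A ^ 2) + (1/4 : ℝ) * ‖S‖)
        * ((1/2 : ℝ) * numRadius (A ^ 2) + (1/4 : ℝ) * ‖S‖) :=
    mul_le_mul h1 h1 (sq_nonneg _) hc0
  have h6 : numRadius A ^ 4 = numRadius A ^ 2 * numRadius A ^ 2 := by ring
  rw [h6]
  nlinarith [h5, hss, mul_nonneg hw2 hs0, norm_nonneg P, numRadius_nonneg T]
end
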